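/- Fix N ≥ 1, h ∈ ℝ, and J_1,...,J_N ≥ 0. For k = 0,1,...,N set p_k = Λ( h - ∑_{j≤k} J_j + ∑_{j>k} J_j ), where Λ(x) = e^{2x}/(1+e^{2x}). Define ν = p_0 - p_N. Then: (i) 0 ≤ ν < 1; (ii) χ := p_N/(1-ν) satisfies 0 < χ < 1; (iii) if ν > 0, the numbers λ_k := (p_{k-1} - p_k)/ν for k = 1,...,N satisfy λ_k ≥ 0 and ∑_{k=1}^N λ_k = 1; and (iv) with these definitions the N+1 matching equations p_k = ν ∑_{j>k} λ_j + (1-ν)χ hold for every k = 0,1,...,N. Hence every Kinetic Ising Model variable with nonnegative couplings and strictly positive coupling sum corresponds to valid VDAR(1) parameters. -/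

import Mathlib

/-- The logistic function `Λ(x) = e^{2x}/(1 + e^{2x})`. -/
noncomputable def Lam (x : ℝ) : ℝ := Real.exp (2 * x) / (1 + Real.exp (2 * x))

lemma Lam_pos (x : ℝ) : 0 < Lam x := div_pos (Real.exp_pos _) (by positivity)

lemma Lam_lt_one (x : ℝ) : Lam x < 1 := by
  rw [Lam, div_lt_one (by positivity)]
  linarith [Real.exp_pos (2*x)]

lemma Lam_mono : Monotone Lam := by
  intro x y hxy
  have hx := Real.exp_pos (2*x)
  have hy := Real.exp_pos (2*y)
  have hle : Real.exp (2*x) ≤ Real.exp (2*y) := Real.exp_le_exp.2 (by linarith)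
  rw [Lam, Lam, div_le_div_iff₀ (by positivity) (by positivity)]
  nlinarith

lemma tele_aux (p : ℕ → ℝ) (N k : ℕ) (hk : k ≤ N) :
    (∑ j ∈ Finset.univ.filter (fun j : Fin N => k ≤ (j : ℕ)),
      (p (j:ℕ) - p ((j:ℕ)+1))) = p k - p N := by
  have h1 : (∑ j ∈ Finset.univ.filter (fun j : Fin N => k ≤ (j : ℕ)),
      (p (j:ℕ) - p ((j:ℕ)+1)))
      = ∑ j ∈ (Finset.range N).filter (fun j => k ≤ j), (p j - p (j+1)) := by
    rw [Finset.sum_filter, Finset.sum_filter,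
      Fin.sum_univ_eq_sum_range (fun j => if k ≤ j then p j - p (j+1) else 0)]
  rw [h1]
  have h2 : (Finset.range N).filter (fun j => k ≤ j) = Finset.Ico k N := by
    ext j; simp [Finset.mem_Ico]; omega
  rw [h2, Finset.sum_Ico_eq_sum_range]
  calc ∑ i ∈ Finset.range (N-k), (p (k+i) - p (k+i+1))
      = ∑ i ∈ Finset.range (N-k),
          ((fun i => p (k+i)) i - (fun i => p (k+i)) (i+1)) := by
        apply Finset.sum_congr rfl; intro i _; simp [Nat.add_assoc]
    _ = p (k+0) - p (k+(N-k)) := Finset.sum_range_sub' _ _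
    _ = p k - p N := by rw [Nat.add_zero, Nat.add_sub_cancel' hk]

theorem stmt_13 (N : ℕ) (hN : 1 ≤ N) (h : ℝ) (J : Fin N → ℝ) (hJ : ∀ k, 0 ≤ J k)
    (p : ℕ → ℝ)
    (hp : ∀ k : ℕ, k ≤ N →
      p k = Lam (h - (∑ j ∈ Finset.univ.filter (fun j : Fin N => (j : ℕ) < k), J j)
                  + (∑ j ∈ Finset.univ.filter (fun j : Fin N => k ≤ (j : ℕ)), J j)))
    (ν : ℝ) (hν : ν = p 0 - p N) :
    (0 ≤ ν ∧ ν < 1) ∧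
    (0 < p N / (1 - ν) ∧ p N / (1 - ν) < 1) ∧
    (0 < ν → (∀ k : Fin N, 0 ≤ (p k - p ((k : ℕ) + 1)) / ν) ∧
      (∑ k : Fin N, (p (k : ℕ) - p ((k : ℕ) + 1)) / ν) = 1) ∧
    (∀ k : ℕ, k ≤ N →
      p k = ν * (∑ j ∈ Finset.univ.filter (fun j : Fin N => k ≤ (j : ℕ)),
                  (p (j : ℕ) - p ((j : ℕ) + 1)) / ν)
            + (1 - ν) * (p N / (1 - ν))) := by
  set A : ℕ → ℝ := fun k => ∑ j ∈ Finset.univ.filter (fun j : Fin N => (j : ℕ) < k), J j with hA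
  set T : ℝ := ∑ j : Fin N, J j with hT
  -- partition identity
  have hAB : ∀ k : ℕ,
      (∑ j ∈ Finset.univ.filter (fun j : Fin N => k ≤ (j : ℕ)), J j) = T - A k := by
    intro k
    have := Finset.sum_filter_add_sum_filter_not Finset.univ
      (fun j : Fin N => (j : ℕ) < k) J
    have hnot : Finset.univ.filter (fun j : Fin N => ¬ (j : ℕ) < k)
        = Finset.univ.filter (fun j : Fin N => k ≤ (j : ℕ)) := by
      ext j; simp [not_lt]
    rw [hnot] at this
    simp only [hA, hT]
    linarith
  have hpk : ∀ k : ℕ, k ≤ N → p k = Lam (h + T - 2 * A k) := by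
    intro k hk
    rw [hp k hk, hAB k]
    change Lam (h - A k + (T - A k)) = _
    ring_nf
  -- A is monotone
  have hAle : ∀ k l : ℕ, k ≤ l → A k ≤ A l := by
    intro k l hkl
    apply Finset.sum_le_sum_of_subset_of_nonneg
    · intro x hx; simp only [Finset.mem_filter, Finset.mem_univ, true_and] at *; omega
    · intro i _ _; exact hJ i
  have hmono : ∀ k l : ℕ, k ≤ l → l ≤ N → p l ≤ p k := by
    intro k l hkl hl
    rw [hpk k (le_trans hkl hl), hpk l hl]
    exact Lam_mono (by linarith [hAle k l hkl])
  have hpN_pos : 0 < p N := by rw [hpk N le_rfl]; exact Lam_pos _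
  have hp0_lt : p 0 < 1 := by rw [hpk 0 (Nat.zero_le _)]; exact Lam_lt_one _
  have hν0 : 0 ≤ ν := by rw [hν]; linarith [hmono 0 N (Nat.zero_le _) le_rfl]
  have hν1 : ν < 1 := by rw [hν]; linarith
  have h1ν : (0:ℝ) < 1 - ν := by linarith
  refine ⟨⟨hν0, hν1⟩, ⟨div_pos hpN_pos h1ν, ?_⟩, ?_, ?_⟩
  · rw [div_lt_one h1ν, hν]; linarith
  · intro hνpos
    constructor
    · intro k
      have hk1 : (k:ℕ) + 1 ≤ N := k.2
      exact div_nonneg (by linarith [hmono k (k+1) (Nat.le_succ _) hk1]) hνpos.le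
    · rw [← Finset.sum_div]
      have : (∑ k : Fin N, (p (k:ℕ) - p ((k:ℕ)+1)))
          = ∑ j ∈ Finset.univ.filter (fun j : Fin N => 0 ≤ (j : ℕ)),
              (p (j:ℕ) - p ((j:ℕ)+1)) := by
        apply Finset.sum_congr _ (fun _ _ => rfl)
        simp
      rw [this, tele_aux p N 0 (Nat.zero_le _), ← hν]
      field_simp
  · intro k hk
    have hχ : (1 - ν) * (p N / (1 - ν)) = p N := by field_simp
    rcases eq_or_lt_of_le hν0 with hz | hpos
    · have hpkN : p k = p N := by
        have h1 := hmono 0 k (Nat.zero_le _) hk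
        have h2 := hmono k N hk le_rfl
        rw [hν] at hz
        linarith
      rw [← hz] at *
      simp only [zero_mul, zero_add, sub_zero, one_mul, div_one]
      exact hpkN
    · have hsum : (∑ j ∈ Finset.univ.filter (fun j : Fin N => k ≤ (j : ℕ)),
          (p (j:ℕ) - p ((j:ℕ)+1)) / ν)
          = (p k - p N) / ν := by
        rw [← Finset.sum_div, tele_aux p N k hk]
      rw [hsum, hχ, mul_div_cancel₀ _ (ne_of_gt hpos)]
      ring
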